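/- Let Z₁, Z₂ be independent standard Gaussian random variables, let ρ ∈ (−1, 1), and define U = Z₁ and V = ρ·Z₁ + √(1−ρ²)·Z₂ (so that U and V are standard Gaussian with correlation ρ). Then ℙ[U ≥ 0 and |V| ≥ U] = 1/4. -/

import Mathlib

open MeasureTheory ProbabilityTheory
open scoped ENNReal NNReal

section Aux

/-- The product of two standard gaussians as a density w.r.t. 2D Lebesgue measure. -/
lemma aux_gauss_prod_density :
    (gaussianReal 0 1).prod (gaussianReal 0 1)
      = ((volume : Measure ℝ).prod (volume : Measure ℝ)).withDensity
          (fun p => gaussianPDF 0 1 p.1 * gaussianPDF 0 1 p.2) := by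
  refine Measure.prod_eq fun s t hs ht => ?_
  rw [withDensity_apply _ (hs.prod ht), ← Measure.prod_restrict,
    lintegral_prod_mul (measurable_gaussianPDF 0 1).aemeasurable
      (measurable_gaussianPDF 0 1).aemeasurable,
    gaussianReal_apply 0 one_ne_zero s, gaussianReal_apply 0 one_ne_zero t]

lemma aux_map_withDensity {α β : Type*} [MeasurableSpace α] [MeasurableSpace β]
    {T : α → β} (hT : Measurable T) {ψ : β → ℝ≥0∞} (hψ : Measurable ψ) (μ : Measure α) :
    (μ.withDensity (ψ ∘ T)).map T = (μ.map T).withDensity ψ := by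
  ext s hs
  rw [Measure.map_apply hT hs, withDensity_apply _ (hT hs), withDensity_apply _ hs,
    setLIntegral_map hs hψ hT]
  rfl

lemma aux_pdf_rot {a b : ℝ} (hab : a ^ 2 + b ^ 2 = 1) (x y : ℝ) :
    gaussianPDF 0 1 (a * x + b * y) * gaussianPDF 0 1 (b * x - a * y)
      = gaussianPDF 0 1 x * gaussianPDF 0 1 y := by
  simp only [gaussianPDF_def]
  rw [← ENNReal.ofReal_mul (gaussianPDFReal_nonneg _ _ _),
    ← ENNReal.ofReal_mul (gaussianPDFReal_nonneg _ _ _)]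
  congr 1
  simp only [gaussianPDFReal, NNReal.coe_one, mul_one, sub_zero]
  rw [mul_mul_mul_comm, ← Real.exp_add, mul_mul_mul_comm, ← Real.exp_add]
  have hE : -(a * x + b * y) ^ 2 / 2 + -(b * x - a * y) ^ 2 / 2
      = -x ^ 2 / 2 + -y ^ 2 / 2 := by
    linear_combination (-(x ^ 2 + y ^ 2) / 2) * hab
  rw [hE]

/-- Reflection `(x,y) ↦ (a x + b y, b x − a y)` with `a² + b² = 1` preserves the
standard 2D Gaussian measure. -/
lemma aux_refl {a b : ℝ} (hab : a ^ 2 + b ^ 2 = 1) :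
    MeasurePreserving (fun p : ℝ × ℝ => (a * p.1 + b * p.2, b * p.1 - a * p.2))
      ((gaussianReal 0 1).prod (gaussianReal 0 1))
      ((gaussianReal 0 1).prod (gaussianReal 0 1)) := by
  set g : ℝ × ℝ → ℝ × ℝ := fun p => (a * p.1 + b * p.2, b * p.1 - a * p.2) with hg
  have hgm : Measurable g := by
    apply Measurable.prod <;> simp only [g] <;> fun_prop
  refine ⟨hgm, ?_⟩
  -- the linear map and its determinant
  let L : (ℝ × ℝ) →ₗ[ℝ] (ℝ × ℝ) :=
    { toFun := g
      map_add' := by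
        intro p q
        simp only [g, Prod.fst_add, Prod.snd_add, Prod.mk_add_mk, Prod.mk.injEq]
        constructor <;> ring
      map_smul' := by
        intro c p
        simp only [g, Prod.smul_fst, Prod.smul_snd, Prod.smul_mk, smul_eq_mul,
          RingHom.id_apply, Prod.mk.injEq]
        constructor <;> ring }
  have hM : LinearMap.toMatrix (Module.Basis.finTwoProd ℝ) (Module.Basis.finTwoProd ℝ) L
      = !![a, b; b, -a] := by
    ext i j
    fin_cases i <;> fin_cases j <;>
      simp [LinearMap.toMatrix_apply, L, g, Module.Basis.finTwoProd_zero, Module.Basis.finTwoProd_one,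
        Module.Basis.coe_finTwoProd_repr, Matrix.of_apply]
  have hdet : LinearMap.det L = -1 := by
    rw [← LinearMap.det_toMatrix (Module.Basis.finTwoProd ℝ) L, hM, Matrix.det_fin_two_of]
    linear_combination -hab
  have hvol : Measure.map g ((volume : Measure ℝ).prod (volume : Measure ℝ))
      = (volume : Measure ℝ).prod (volume : Measure ℝ) := by
    have h := Measure.map_linearMap_addHaar_eq_smul_addHaar
      ((volume : Measure ℝ).prod (volume : Measure ℝ)) (f := L) (by rw [hdet]; norm_num)
    have hLg : ⇑L = g := rfl
    rw [hLg, hdet] at h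
    have h1 : ENNReal.ofReal |((-1 : ℝ))⁻¹| = 1 := by norm_num
    rw [h1, one_smul] at h
    exact h
  have hψm : Measurable (fun p : ℝ × ℝ => gaussianPDF 0 1 p.1 * gaussianPDF 0 1 p.2) :=
    ((measurable_gaussianPDF 0 1).comp measurable_fst).mul
      ((measurable_gaussianPDF 0 1).comp measurable_snd)
  have hcomp : (fun p : ℝ × ℝ => gaussianPDF 0 1 p.1 * gaussianPDF 0 1 p.2) ∘ g
      = fun p : ℝ × ℝ => gaussianPDF 0 1 p.1 * gaussianPDF 0 1 p.2 := by
    funext p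
    exact aux_pdf_rot hab p.1 p.2
  calc ((gaussianReal 0 1).prod (gaussianReal 0 1)).map g
      = (((volume : Measure ℝ).prod (volume : Measure ℝ)).withDensity
          ((fun p : ℝ × ℝ => gaussianPDF 0 1 p.1 * gaussianPDF 0 1 p.2) ∘ g)).map g := by
        rw [hcomp, ← aux_gauss_prod_density]
    _ = (((volume : Measure ℝ).prod (volume : Measure ℝ)).map g).withDensity
          (fun p : ℝ × ℝ => gaussianPDF 0 1 p.1 * gaussianPDF 0 1 p.2) :=
        aux_map_withDensity hgm hψm _
    _ = (gaussianReal 0 1).prod (gaussianReal 0 1) := by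
        rw [hvol, ← aux_gauss_prod_density]

lemma aux_line_null {c d : ℝ} (hd : d ≠ 0) :
    ((gaussianReal 0 1).prod (gaussianReal 0 1)) {p : ℝ × ℝ | c * p.1 + d * p.2 = 0} = 0 := by
  have hmeas : MeasurableSet {p : ℝ × ℝ | c * p.1 + d * p.2 = 0} := by
    have : Measurable (fun p : ℝ × ℝ => c * p.1 + d * p.2) := by fun_prop
    exact this (measurableSet_singleton 0)
  rw [Measure.prod_apply hmeas]
  have hzero : ∀ x : ℝ, gaussianReal 0 1 {y : ℝ | c * x + d * y = 0} = 0 := by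
    intro x
    have hset : {y : ℝ | c * x + d * y = 0} = {-(c * x) / d} := by
      ext y
      simp only [Set.mem_setOf_eq, Set.mem_singleton_iff]
      constructor
      · intro h
        field_simp
        linarith
      · intro h
        subst h
        field_simp
        ring
    rw [hset]
    exact gaussianReal_absolutelyContinuous 0 one_ne_zero (measure_singleton _)
  have : ∀ x : ℝ, (Prod.mk x ⁻¹' {p : ℝ × ℝ | c * p.1 + d * p.2 = 0})
      = {y : ℝ | c * x + d * y = 0} := fun x => rfl
  simp only [this, hzero, lintegral_zero]

lemma aux_fst_null :
    ((gaussianReal 0 1).prod (gaussianReal 0 1)) {p : ℝ × ℝ | p.1 = 0} = 0 := by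
  have hset : {p : ℝ × ℝ | p.1 = 0} = ({0} : Set ℝ) ×ˢ (Set.univ : Set ℝ) := by
    ext p
    simp only [Set.mem_setOf_eq, Set.mem_prod, Set.mem_singleton_iff, Set.mem_univ, and_true]
  rw [hset, Measure.prod_prod]
  have : gaussianReal 0 1 ({0} : Set ℝ) = 0 :=
    gaussianReal_absolutelyContinuous 0 one_ne_zero (measure_singleton _)
  simp [this]

end Aux

/-- Final step in the proof of Proposition 4: for jointly Gaussian standard
`U, V` with correlation `ρ ∈ (−1,1)`, built as `U = Z₁`,
`V = ρ·Z₁ + √(1−ρ²)·Z₂` from independent standard Gaussians `Z₁, Z₂`,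
`ℙ[U ≥ 0, |V| ≥ U] = 1/4`. -/
theorem stmt19 {Ω : Type*} [MeasurableSpace Ω] (μ : Measure Ω) [IsProbabilityMeasure μ]
    (Z₁ Z₂ : Ω → ℝ) (h1m : Measurable Z₁) (h2m : Measurable Z₂)
    (h1 : μ.map Z₁ = gaussianReal 0 1) (h2 : μ.map Z₂ = gaussianReal 0 1)
    (hindep : IndepFun Z₁ Z₂ μ)
    (ρ : ℝ) (hρ0 : -1 < ρ) (hρ1 : ρ < 1)
    (U V : Ω → ℝ)
    (hU : U = Z₁)
    (hV : V = fun ω => ρ * Z₁ ω + Real.sqrt (1 - ρ ^ 2) * Z₂ ω) :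
    (μ {ω | 0 ≤ U ω ∧ U ω ≤ |V ω|}).toReal = 1 / 4 := by
  simp only [hU, hV]
  set s : ℝ := Real.sqrt (1 - ρ ^ 2) with hs_def
  have h1ρ : 0 < 1 - ρ ^ 2 := by nlinarith
  have hs2 : s ^ 2 = 1 - ρ ^ 2 := Real.sq_sqrt h1ρ.le
  have hs_pos : 0 < s := Real.sqrt_pos.mpr h1ρ
  have hab : ρ ^ 2 + s ^ 2 = 1 := by rw [hs2]; ring
  set π : Measure (ℝ × ℝ) := (gaussianReal 0 1).prod (gaussianReal 0 1) with hπ_def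
  have hpair : Measurable (fun ω => (Z₁ ω, Z₂ ω)) := h1m.prodMk h2m
  have hmapZ : μ.map (fun ω => (Z₁ ω, Z₂ ω)) = π := by
    rw [(indepFun_iff_map_prod_eq_prod_map_map h1m.aemeasurable h2m.aemeasurable).mp hindep,
      h1, h2]
  -- The function v and the various sets
  set vv : ℝ × ℝ → ℝ := fun p => ρ * p.1 + s * p.2 with hvv_def
  have hvvm : Measurable vv := by fun_prop
  set A : Set (ℝ × ℝ) := {p | 0 ≤ p.1 ∧ p.1 ≤ |vv p|} with hA_def
  set A₁ : Set (ℝ × ℝ) := {p | 0 ≤ p.1 ∧ p.1 ≤ vv p} with hA₁_def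
  set A₂ : Set (ℝ × ℝ) := {p | 0 ≤ p.1 ∧ p.1 ≤ -(vv p)} with hA₂_def
  set B₂ : Set (ℝ × ℝ) := {p | p.1 ≤ 0 ∧ -p.1 ≤ vv p} with hB₂_def
  set T : Set (ℝ × ℝ) := {p | |p.1| ≤ vv p} with hT_def
  set R : Set (ℝ × ℝ) := {p | |vv p| ≤ p.1} with hR_def
  set Bo : Set (ℝ × ℝ) := {p | vv p ≤ -|p.1|} with hBo_def
  set Ll : Set (ℝ × ℝ) := {p | p.1 ≤ -|vv p|} with hLl_def
  have hAmeas : MeasurableSet A :=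
    (measurableSet_le measurable_const measurable_fst).inter
      (measurableSet_le measurable_fst hvvm.abs)
  have hA₁meas : MeasurableSet A₁ :=
    (measurableSet_le measurable_const measurable_fst).inter
      (measurableSet_le measurable_fst hvvm)
  have hA₂meas : MeasurableSet A₂ :=
    (measurableSet_le measurable_const measurable_fst).inter
      (measurableSet_le measurable_fst hvvm.neg)
  have hB₂meas : MeasurableSet B₂ :=
    (measurableSet_le measurable_fst measurable_const).inter
      (measurableSet_le measurable_fst.neg hvvm)
  have hTmeas : MeasurableSet T := measurableSet_le measurable_fst.abs hvvm
  have hRmeas : MeasurableSet R := measurableSet_le hvvm.abs measurable_fst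
  have hBomeas : MeasurableSet Bo := measurableSet_le hvvm measurable_fst.abs.neg
  have hLlmeas : MeasurableSet Ll := measurableSet_le measurable_fst hvvm.abs.neg
  -- Null sets
  have hV0 : π {p : ℝ × ℝ | vv p = 0} = 0 := by
    have : {p : ℝ × ℝ | vv p = 0} = {p : ℝ × ℝ | ρ * p.1 + s * p.2 = 0} := rfl
    rw [hπ_def, this]
    exact aux_line_null hs_pos.ne'
  have hUeqV : π {p : ℝ × ℝ | p.1 = vv p} = 0 := by
    have h : {p : ℝ × ℝ | p.1 = vv p} = {p : ℝ × ℝ | (1 - ρ) * p.1 + (-s) * p.2 = 0} := by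
      ext p
      simp only [Set.mem_setOf_eq, hvv_def]
      constructor <;> intro h <;> linarith
    rw [hπ_def, h]
    exact aux_line_null (by linarith)
  have hUeqnegV : π {p : ℝ × ℝ | p.1 = -(vv p)} = 0 := by
    have h : {p : ℝ × ℝ | p.1 = -(vv p)} = {p : ℝ × ℝ | (1 + ρ) * p.1 + s * p.2 = 0} := by
      ext p
      simp only [Set.mem_setOf_eq, hvv_def]
      constructor <;> intro h <;> linarith
    rw [hπ_def, h]
    exact aux_line_null hs_pos.ne'
  have hfst0 : π {p : ℝ × ℝ | p.1 = 0} = 0 := by rw [hπ_def]; exact aux_fst_null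
  -- Measure-preserving maps
  have hg2 : MeasurePreserving (fun p : ℝ × ℝ => (ρ * p.1 + s * p.2, s * p.1 - ρ * p.2)) π π :=
    aux_refl hab
  have hgx : MeasurePreserving (fun p : ℝ × ℝ => (-p.1, p.2)) π π := by
    have h := aux_refl (a := -1) (b := 0) (by norm_num)
    have he : (fun p : ℝ × ℝ => ((-1 : ℝ) * p.1 + 0 * p.2, 0 * p.1 - (-1 : ℝ) * p.2))
        = fun p : ℝ × ℝ => (-p.1, p.2) := by funext p; norm_num
    rwa [he] at h
  have hgy : MeasurePreserving (fun p : ℝ × ℝ => (p.1, -p.2)) π π := by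
    have h := aux_refl (a := 1) (b := 0) (by norm_num)
    have he : (fun p : ℝ × ℝ => ((1 : ℝ) * p.1 + 0 * p.2, 0 * p.1 - (1 : ℝ) * p.2))
        = fun p : ℝ × ℝ => (p.1, -p.2) := by funext p; norm_num
    rwa [he] at h
  have hneg : MeasurePreserving (fun p : ℝ × ℝ => (-p.1, -p.2)) π π := by
    have h := hgx.comp hgy
    have he : ((fun p : ℝ × ℝ => (-p.1, p.2)) ∘ (fun p : ℝ × ℝ => (p.1, -p.2)))
        = fun p : ℝ × ℝ => (-p.1, -p.2) := by funext p; simp [Function.comp]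
    rwa [he] at h
  have hvneg : ∀ p : ℝ × ℝ, vv (-p.1, -p.2) = -(vv p) := by
    intro p; simp only [hvv_def]; ring
  -- Step A : π A = π T
  have hAsplit : A = A₁ ∪ A₂ := by
    ext p
    simp only [hA_def, hA₁_def, hA₂_def, Set.mem_setOf_eq, Set.mem_union, le_abs]
    tauto
  have hA₁₂ : π (A₁ ∪ A₂) + π (A₁ ∩ A₂) = π A₁ + π A₂ := measure_union_add_inter _ hA₂meas
  have hA₁₂null : π (A₁ ∩ A₂) = 0 := by
    refine measure_mono_null ?_ hV0
    rintro p ⟨hpa, hpb⟩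
    simp only [hA₁_def, hA₂_def, Set.mem_setOf_eq] at hpa hpb
    obtain ⟨hp0, hp1⟩ := hpa
    obtain ⟨_, hp2⟩ := hpb
    simp only [Set.mem_setOf_eq]
    linarith
  have hA₂B₂ : π A₂ = π B₂ := by
    have h := hneg.measure_preimage hA₂meas.nullMeasurableSet
    have hset : (fun p : ℝ × ℝ => (-p.1, -p.2)) ⁻¹' A₂ = B₂ := by
      ext p
      simp only [Set.mem_preimage, hA₂_def, hB₂_def, Set.mem_setOf_eq, hvneg p]
      constructor <;> rintro ⟨h1, h2⟩ <;> constructor <;> linarith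
    rw [hset] at h
    exact h.symm
  have hA₁B₂ : π A₁ + π B₂ = π T + π (A₁ ∩ B₂) := by
    have hu : A₁ ∪ B₂ = T := by
      ext p
      simp only [hA₁_def, hB₂_def, hT_def, Set.mem_union, Set.mem_setOf_eq, abs_le]
      constructor
      · rintro (⟨h1, h2⟩ | ⟨h1, h2⟩) <;> constructor <;> linarith
      · rintro ⟨h1, h2⟩
        rcases le_total 0 p.1 with h | h
        · left; exact ⟨h, h2⟩
        · right; exact ⟨h, by linarith⟩
    have := measure_union_add_inter (μ := π) A₁ hB₂meas
    rw [hu] at this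
    exact this.symm
  have hA₁B₂null : π (A₁ ∩ B₂) = 0 := by
    refine measure_mono_null ?_ hfst0
    rintro p ⟨hpa, hpb⟩
    simp only [hA₁_def, hB₂_def, Set.mem_setOf_eq] at hpa hpb
    obtain ⟨hp0, _⟩ := hpa
    obtain ⟨hp1, _⟩ := hpb
    simp only [Set.mem_setOf_eq]
    linarith
  have hAT : π A = π T := by
    have h1' : π A = π A₁ + π A₂ := by
      rw [hAsplit, ← hA₁₂, hA₁₂null, add_zero]
    rw [h1', hA₂B₂, hA₁B₂, hA₁B₂null, add_zero]
  -- Step B : π T = π R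
  have hTR : π T = π R := by
    have h := hg2.measure_preimage hTmeas.nullMeasurableSet
    have hset : (fun p : ℝ × ℝ => (ρ * p.1 + s * p.2, s * p.1 - ρ * p.2)) ⁻¹' T = R := by
      ext p
      have hval : vv (ρ * p.1 + s * p.2, s * p.1 - ρ * p.2) = p.1 := by
        simp only [hvv_def]
        linear_combination p.1 * hab
      simp only [Set.mem_preimage, hT_def, hR_def, Set.mem_setOf_eq, hval]
      exact Iff.rfl
    rw [hset] at h
    exact h.symm
  -- Step C : π T = π Bo, π R = π Ll
  have hTBo : π T = π Bo := by
    have h := hneg.measure_preimage hTmeas.nullMeasurableSet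
    have hset : (fun p : ℝ × ℝ => (-p.1, -p.2)) ⁻¹' T = Bo := by
      ext p
      simp only [Set.mem_preimage, hT_def, hBo_def, Set.mem_setOf_eq, hvneg p, abs_neg]
      constructor <;> intro h <;> linarith
    rw [hset] at h
    exact h.symm
  have hRLl : π R = π Ll := by
    have h := hneg.measure_preimage hRmeas.nullMeasurableSet
    have hset : (fun p : ℝ × ℝ => (-p.1, -p.2)) ⁻¹' R = Ll := by
      ext p
      simp only [Set.mem_preimage, hR_def, hLl_def, Set.mem_setOf_eq, hvneg p, abs_neg]
      constructor <;> intro h <;> linarith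
    rw [hset] at h
    exact h.symm
  -- Step E : the four cones cover the plane
  have hcover : T ∪ R ∪ (Bo ∪ Ll) = Set.univ := by
    ext p
    simp only [Set.mem_union, Set.mem_univ, iff_true, hT_def, hR_def, hBo_def, hLl_def,
      Set.mem_setOf_eq]
    set x := p.1
    set y := vv p
    rcases abs_cases x with ⟨ex, hx⟩ | ⟨ex, hx⟩ <;> rcases abs_cases y with ⟨ey, hy⟩ | ⟨ey, hy⟩ <;>
      rw [ex, ey] <;> rcases le_total x y with h | h <;> rcases le_total x (-y) with h2 | h2 <;>
      first
        | (left; left; linarith)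
        | (left; right; linarith)
        | (right; left; linarith)
        | (right; right; linarith)
  -- Step F : additivity
  have hTRsum : π (T ∪ R) + π (T ∩ R) = π T + π R := measure_union_add_inter _ hRmeas
  have hTRnull : π (T ∩ R) = 0 := by
    refine measure_mono_null ?_ hUeqV
    rintro p ⟨hp1, hp2⟩
    simp only [hT_def, hR_def, Set.mem_setOf_eq] at hp1 hp2
    simp only [Set.mem_setOf_eq]
    have h1 := le_abs_self p.1
    have h2 := le_abs_self (vv p)
    linarith
  have hBoLlsum : π (Bo ∪ Ll) + π (Bo ∩ Ll) = π Bo + π Ll := measure_union_add_inter _ hLlmeas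
  have hBoLlnull : π (Bo ∩ Ll) = 0 := by
    refine measure_mono_null ?_ hUeqV
    rintro p ⟨hp1, hp2⟩
    simp only [hBo_def, hLl_def, Set.mem_setOf_eq] at hp1 hp2
    simp only [Set.mem_setOf_eq]
    have h1 := neg_abs_le p.1
    have h2 := neg_abs_le (vv p)
    linarith
  have hbig : π ((T ∪ R) ∪ (Bo ∪ Ll)) + π ((T ∪ R) ∩ (Bo ∪ Ll))
      = π (T ∪ R) + π (Bo ∪ Ll) :=
    measure_union_add_inter _ (hBomeas.union hLlmeas)
  have hbignull : π ((T ∪ R) ∩ (Bo ∪ Ll)) = 0 := by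
    have hsub : (T ∪ R) ∩ (Bo ∪ Ll) ⊆ {p : ℝ × ℝ | vv p = 0} ∪ {p : ℝ × ℝ | p.1 = -(vv p)} := by
      rintro p ⟨hp1 | hp1, hp2 | hp2⟩ <;>
        simp only [Set.mem_setOf_eq, hT_def, hR_def, hBo_def, hLl_def] at hp1 hp2 <;>
        simp only [Set.mem_union, Set.mem_setOf_eq]
      · left
        have := abs_nonneg p.1
        linarith
      · right
        have h1 := le_abs_self (vv p)
        have h2 := neg_abs_le p.1
        linarith
      · right
        have h1 := le_abs_self p.1
        have h2 := neg_abs_le (vv p)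
        linarith
      · left
        have := abs_nonneg (vv p)
        have h2 := abs_nonneg p.1
        have h3 := le_abs_self (vv p)
        have h4 := neg_abs_le (vv p)
        linarith
    exact measure_mono_null hsub (measure_union_null hV0 hUeqnegV)
  have hprob : IsProbabilityMeasure π := by rw [hπ_def]; infer_instance
  have hTRs : π (T ∪ R) = π T + π R := by
    rw [← hTRsum, hTRnull, add_zero]
  have hBoLls : π (Bo ∪ Ll) = π Bo + π Ll := by
    rw [← hBoLlsum, hBoLlnull, add_zero]
  have hbig' : π ((T ∪ R) ∪ (Bo ∪ Ll)) = π (T ∪ R) + π (Bo ∪ Ll) := by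
    rw [← hbig, hbignull, add_zero]
  have hsum4 : π T + π R + (π Bo + π Ll) = 1 := by
    rw [← hTRs, ← hBoLls, ← hbig', hcover]
    exact measure_univ
  have hT4 : (4 : ℝ≥0∞) * π T = 1 := by
    rw [← hsum4, ← hRLl, ← hTR, ← hTBo]
    ring
  have hTval : π T = 4⁻¹ := by
    calc π T = 4⁻¹ * ((4 : ℝ≥0∞) * π T) := by
          rw [← mul_assoc, ENNReal.inv_mul_cancel (by norm_num) (by norm_num), one_mul]
      _ = 4⁻¹ := by rw [hT4, mul_one]
  -- Conclusion
  have hevent : {ω | 0 ≤ Z₁ ω ∧ Z₁ ω ≤ |ρ * Z₁ ω + s * Z₂ ω|}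
      = (fun ω => (Z₁ ω, Z₂ ω)) ⁻¹' A := by
    ext ω
    simp only [Set.mem_setOf_eq, Set.mem_preimage, hA_def, hvv_def]
  have hμA : μ {ω | 0 ≤ Z₁ ω ∧ Z₁ ω ≤ |ρ * Z₁ ω + s * Z₂ ω|} = π A := by
    rw [hevent, ← hmapZ, Measure.map_apply hpair hAmeas]
  have : μ {ω | 0 ≤ Z₁ ω ∧ Z₁ ω ≤ |ρ * Z₁ ω + s * Z₂ ω|} = 4⁻¹ := by
    rw [hμA, hAT, hTval]
  simp only [this]
  norm_num [ENNReal.toReal_inv]
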